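/- For every L ≥ 1 and every K ≥ 1, in an L-locally connected network with K users there exists a conflict-free one-shot schedule (S, t) with |S| ≥ 2·⌊K/(L+2)⌋. Explicitly, for each block k = 0, 1, ..., ⌊K/(L+2)⌋ − 1, writing b = k(L+2), one may take the receivers b+L+1 and b+L+2 into S, served by transmitters t(b+L+1) = b+1 and t(b+L+2) = b+L+2, and this choice satisfies all conflict-free schedule conditions. -/

import Mathlib

/-- `(S, t)` is a conflict-free one-shot schedule in an `L`-locally connected
network with `K` users: `S ⊆ {1,…,K}`, `t` maps `S` into `{1,…,K}` injectively,
each receiver `i ∈ S` is connected to its serving transmitter `t i`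
(`t i ≤ i ≤ t i + L`), and no receiver `i ∈ S` is connected to the transmitter
`t j` serving a different receiver `j ∈ S`. -/
def IsCFSchedule (L K : ℕ) (S : Finset ℕ) (t : ℕ → ℕ) : Prop :=
  S ⊆ Finset.Icc 1 K ∧
  (∀ i ∈ S, t i ∈ Finset.Icc 1 K) ∧
  Set.InjOn t ↑S ∧
  (∀ i ∈ S, t i ≤ i ∧ i ≤ t i + L) ∧
  (∀ i ∈ S, ∀ j ∈ S, i ≠ j → ¬(t j ≤ i ∧ i ≤ t j + L))

/-- For every `L ≥ 1` and `K ≥ 1` there is a conflict-free one-shot schedule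
with at least `2 * ⌊K / (L + 2)⌋` scheduled receivers; explicitly, for each block
`k < ⌊K / (L + 2)⌋` with base `b = k (L + 2)`, one may schedule receivers
`b + L + 1` and `b + L + 2`, served by transmitters `b + 1` and `b + L + 2`
respectively. -/
theorem tdma_achievability (L K : ℕ) (hL : 1 ≤ L) (hK : 1 ≤ K) :
    ∃ (S : Finset ℕ) (t : ℕ → ℕ),
      IsCFSchedule L K S t ∧
      2 * (K / (L + 2)) ≤ S.card ∧
      S = (Finset.range (K / (L + 2))).biUnion
            (fun k => {k * (L + 2) + L + 1, k * (L + 2) + L + 2}) ∧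
      (∀ k < K / (L + 2),
        t (k * (L + 2) + L + 1) = k * (L + 2) + 1 ∧
        t (k * (L + 2) + L + 2) = k * (L + 2) + L + 2) := by
  set m := L + 2 with hm
  set N := K / m with hN
  have hmL : m = L + 2 := rfl
  have sep : ∀ a b : ℕ, a < b → a * m + m ≤ b * m := by
    intro a b h
    calc a * m + m = (a + 1) * m := by ring
      _ ≤ b * m := Nat.mul_le_mul_right m h
  have main : ∀ a b : ℕ, a * m ≤ b * m + L + 1 → b * m ≤ a * m + L + 1 → a = b := by
    intro a b h1 h2
    rcases Nat.lt_trichotomy a b with h | h | h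
    · have := sep a b h; linarith
    · exact h
    · have := sep b a h; linarith
  have hNK : N * m ≤ K := Nat.div_mul_le_self K m
  set t : ℕ → ℕ := fun i => if i % m = 0 then i else i - L with ht
  have mod1 : ∀ k : ℕ, (k * m + L + 1) % m = L + 1 := by
    intro k
    have h : k * m + L + 1 = L + 1 + k * m := by ring
    rw [h, Nat.add_mul_mod_self_right, Nat.mod_eq_of_lt (by omega)]
  have mod2 : ∀ k : ℕ, (k * m + L + 2) % m = 0 := by
    intro k
    have h : k * m + L + 2 = (k + 1) * m := by ring
    rw [h, Nat.mul_mod_left]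
  have tv1 : ∀ k : ℕ, t (k * m + L + 1) = k * m + 1 := by
    intro k
    show (if (k * m + L + 1) % m = 0 then k * m + L + 1 else k * m + L + 1 - L) = k * m + 1
    rw [mod1, if_neg (by omega)]
    omega
  have tv2 : ∀ k : ℕ, t (k * m + L + 2) = k * m + L + 2 := by
    intro k
    show (if (k * m + L + 2) % m = 0 then k * m + L + 2 else k * m + L + 2 - L) = k * m + L + 2
    rw [mod2, if_pos rfl]
  set S : Finset ℕ := (Finset.range N).biUnion
      (fun k => {k * m + L + 1, k * m + L + 2}) with hS
  have memS : ∀ i, i ∈ S ↔ ∃ k, k < N ∧ (i = k * m + L + 1 ∨ i = k * m + L + 2) := by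
    intro i
    simp [hS, Finset.mem_biUnion, Finset.mem_range, Finset.mem_insert,
      Finset.mem_singleton]
  have bound : ∀ k, k < N → k * m + m ≤ K := by
    intro k hk
    have h1 : k * m + m ≤ N * m := sep k N hk
    omega
  have cardS : S.card = 2 * N := by
    rw [hS, Finset.card_biUnion]
    · have hc : ∀ k ∈ Finset.range N,
          ({k * m + L + 1, k * m + L + 2} : Finset ℕ).card = 2 := by
        intro k _
        rw [Finset.card_insert_of_notMem (by simp), Finset.card_singleton]
      rw [Finset.sum_congr rfl hc, Finset.sum_const, Finset.card_range,
        smul_eq_mul, Nat.mul_comm]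
    · intro k _ k' _ hkk'
      rw [Function.onFun, Finset.disjoint_left]
      intro a ha hb
      simp only [Finset.mem_insert, Finset.mem_singleton] at ha hb
      apply hkk'
      rcases ha with h | h <;> rcases hb with h' | h' <;>
        exact main k k' (by linarith) (by linarith)
  refine ⟨S, t, ⟨?_, ?_, ?_, ?_, ?_⟩, by omega, rfl, fun k _ => ⟨tv1 k, tv2 k⟩⟩
  · -- S ⊆ Icc 1 K
    intro i hi
    rw [memS] at hi
    obtain ⟨k, hk, hik⟩ := hi
    have := bound k hk
    simp only [Finset.mem_Icc]
    omega
  · -- t maps into Icc 1 K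
    intro i hi
    rw [memS] at hi
    obtain ⟨k, hk, hik⟩ := hi
    have hb := bound k hk
    simp only [Finset.mem_Icc]
    rcases hik with h | h <;> subst h
    · rw [tv1]; omega
    · rw [tv2]; omega
  · -- injectivity
    intro i hi j hj hij
    rw [Finset.mem_coe, memS] at hi hj
    obtain ⟨k, hk, hik⟩ := hi
    obtain ⟨k', hk', hjk⟩ := hj
    rcases hik with h | h <;> rcases hjk with h' | h' <;> subst h <;> subst h' <;>
      simp only [tv1, tv2] at hij
    all_goals {
      have hkk : k = k' := main k k' (by linarith) (by linarith)
      subst hkk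
      linarith }
  · -- connectivity
    intro i hi
    rw [memS] at hi
    obtain ⟨k, hk, hik⟩ := hi
    rcases hik with h | h <;> subst h
    · rw [tv1]; exact ⟨by linarith, by linarith⟩
    · rw [tv2]; exact ⟨le_refl _, by linarith⟩
  · -- conflict-freeness
    intro i hi j hj hij
    rw [memS] at hi hj
    obtain ⟨k, hk, hik⟩ := hi
    obtain ⟨k', hk', hjk⟩ := hj
    rintro ⟨h1, h2⟩
    rcases hik with h | h <;> rcases hjk with h' | h' <;> subst h <;> subst h'
    · rw [tv1] at h1 h2
      have hkk : k = k' := main k k' (by linarith) (by linarith)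
      subst hkk; exact hij rfl
    · rw [tv2] at h1 h2
      have hkk : k = k' := main k k' (by linarith) (by linarith)
      subst hkk; linarith
    · rw [tv1] at h1 h2
      have hkk : k = k' := main k k' (by linarith) (by linarith)
      subst hkk; linarith
    · rw [tv2] at h1 h2
      have hkk : k = k' := main k k' (by linarith) (by linarith)
      subst hkk; exact hij rfl
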